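/- arXiv:2511.10454 — 2 statements merged into one kernel-verified Lean document; each statement's English description precedes it below -/
import Mathlib

section
/- In Mod K for K an essentially small rigid tensor-triangulated category, a definable subcategory D of Flat K is ⊗-closed if and only if y(k) ⊗ X ∈ D for every k ∈ K and X ∈ D. -/
open CategoryTheory CategoryTheory.Limits CategoryTheory.MonoidalCategory
open CategoryTheory.Pretriangulated Opposite

universe u

namespace TTG

variable (K : Type u) [SmallCategory K] [Preadditive K]

/-- The module category `Mod K` of additive functors `Kᵒᵖ → Ab`. -/
abbrev Mod := Kᵒᵖ ⥤ AddCommGrpCat.{u}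

/-- The (preadditive) Yoneda embedding. -/
abbrev yK : K ⥤ Mod K := preadditiveYoneda

/-- Finitely presented objects of `Mod K`: cokernels of maps of representables. -/
def IsFP (f : Mod K) : Prop :=
  ∃ (k k' : K) (g : (yK K).obj k ⟶ (yK K).obj k'), Nonempty (f ≅ cokernel g)

/-- Flat (= cohomological) objects of `Mod K`: filtered colimits of representables. -/
def IsFlat (X : Mod K) : Prop :=
  ∃ (J : Type u) (_ : SmallCategory J) (_ : IsFiltered J) (D : J ⥤ K),
    Nonempty (colimit (D ⋙ yK K) ≅ X)

/-- Pure monomorphisms in `Mod K`. -/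
def IsPureMono {A B : Mod K} (i : A ⟶ B) : Prop :=
  Mono i ∧ ∀ f : Mod K, IsFP K f → ∀ g : f ⟶ cokernel i,
    ∃ h : f ⟶ B, h ≫ cokernel.π i = g

/-- Definable subcategories of `Flat K`: classes of flat objects closed under
pure subobjects, products and direct limits. -/
structure IsDefinable (D : Set (Mod K)) : Prop where
  flat : ∀ X ∈ D, IsFlat K X
  pure_sub : ∀ {A B : Mod K} (i : A ⟶ B), IsPureMono K i → B ∈ D → A ∈ D
  prod_mem : ∀ (ι : Type u) (X : ι → Mod K), (∀ i, X i ∈ D) → (∏ᶜ X) ∈ D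
  colim_mem : ∀ (J : Type u) [SmallCategory J] [IsFiltered J] (G : J ⥤ Mod K),
      (∀ j, G.obj j ∈ D) → colimit G ∈ D

/-- The pure subobject closure of a class of objects. -/
def pureClosure (T : Set (Mod K)) : Set (Mod K) :=
  {A | ∃ B ∈ T, ∃ i : A ⟶ B, IsPureMono K i}

section Monoidal

variable [MonoidalCategory (Mod K)]

/-- `⊗`-closed classes of flat objects. -/
def TensorClosed (D : Set (Mod K)) : Prop :=
  ∀ X ∈ D, ∀ Y : Mod K, IsFlat K Y → X ⊗ Y ∈ D

/-- Serre subcategories of `mod K`. -/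
structure IsSerre (S : Set (Mod K)) : Prop where
  fp : ∀ f ∈ S, IsFP K f
  zero_mem : ∀ f : Mod K, IsZero f → f ∈ S
  sub_mem : ∀ {A B : Mod K} (i : A ⟶ B), Mono i → IsFP K A → B ∈ S → A ∈ S
  quot_mem : ∀ {A B : Mod K} (p : A ⟶ B), Epi p → IsFP K B → A ∈ S → B ∈ S
  ext_mem : ∀ (C : ShortComplex (Mod K)), C.ShortExact → IsFP K C.X₂ →
      C.X₁ ∈ S → C.X₃ ∈ S → C.X₂ ∈ S

/-- Serre ⊗-ideals of `mod K`. -/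
def IsSerreTensorIdeal (S : Set (Mod K)) : Prop :=
  IsSerre K S ∧ ∀ f ∈ S, ∀ g : Mod K, IsFP K g → f ⊗ g ∈ S

/-- Homological primes: maximal proper Serre ⊗-ideals of `mod K`. -/
def IsHomPrime (B : Set (Mod K)) : Prop :=
  IsSerreTensorIdeal K B ∧ ¬ (∀ f, IsFP K f → f ∈ B) ∧
    ∀ S, IsSerreTensorIdeal K S → B ⊆ S → ¬ (∀ f, IsFP K f → f ∈ S) → S = B

/-- The definable subcategory `D(S)` associated to a Serre subcategory `S`. -/
def Dcal (S : Set (Mod K)) : Set (Mod K) :=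
  {X | IsFlat K X ∧ ∀ f ∈ S, ∀ g : f ⟶ X, g = 0}

/-- The Serre subcategory `S(D)` associated to a definable subcategory `D`. -/
def Scal (D : Set (Mod K)) : Set (Mod K) :=
  {f | IsFP K f ∧ ∀ X ∈ D, ∀ g : f ⟶ X, g = 0}

/-- The smallest ⊗-closed definable subcategory `Def^⊗(X)` containing `X`. -/
def DefTensor (X : Mod K) : Set (Mod K) :=
  {Y | ∀ D : Set (Mod K), IsDefinable K D → TensorClosed K D → X ∈ D → Y ∈ D}

/-- Simple (= minimal nonzero) ⊗-closed definable subcategories. -/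
def IsSimple (D : Set (Mod K)) : Prop :=
  IsDefinable K D ∧ TensorClosed K D ∧ (∃ X ∈ D, ¬ IsZero X) ∧
    ∀ E ⊆ D, IsDefinable K E → TensorClosed K E → (∃ X ∈ E, ¬ IsZero X) → E = D

/-- Weak ring objects: `η : 𝟙 ⟶ R` with `R ◁ η` a split monomorphism. -/
def IsWeakRing (R : Mod K) : Prop :=
  ∃ η : 𝟙_ (Mod K) ⟶ R, IsSplitMono ((ρ_ R).inv ≫ R ◁ η)

/-- The direct limit closure of a class of objects. -/
def limClosure (S : Set (Mod K)) : Set (Mod K) :=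
  {X | ∃ (J : Type u) (_ : SmallCategory J) (_ : IsFiltered J) (G : J ⥤ Mod K),
    (∀ j, G.obj j ∈ S) ∧ Nonempty (colimit G ≅ X)}

/-- The set of homological primes (points of the homological spectrum). -/
def HP := {B : Set (Mod K) // IsHomPrime K B}

/-- The topology on the homological spectrum, generated by the opens
complementary to the basic closed sets `supp^h(k)`. -/
def hspecTop : TopologicalSpace (HP K) :=
  TopologicalSpace.generateFrom {U | ∃ k : K, U = {B : HP K | (yK K).obj k ∈ B.1}}

end Monoidal

end TTG

namespace TTGAux

open CategoryTheory.Functor.LaxMonoidal CategoryTheory.Functor.OplaxMonoidal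

noncomputable section

variable {C D : Type*} [Category C] [Category D] [MonoidalCategory C] [MonoidalCategory D]
  (F : C ⥤ D) [F.Monoidal]

lemma key1 (X Y : C) :
    F.obj Y ◁ δ F X Y ≫ (α_ _ _ _).inv ≫ μ F Y X ▷ F.obj Y
      = μ F Y (X ⊗ Y) ≫ F.map (α_ Y X Y).inv ≫ δ F (Y ⊗ X) Y := by
  rw [← cancel_mono (μ F (Y ⊗ X) Y)]
  simp only [Category.assoc, Functor.Monoidal.δ_μ, Category.comp_id,
    ← Functor.LaxMonoidal.associativity_inv]
  rw [← MonoidalCategory.whiskerLeft_comp_assoc, Functor.Monoidal.δ_μ,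
    MonoidalCategory.whiskerLeft_id, Category.id_comp]

lemma key2 (X Y : C) :
    δ F X Y ▷ F.obj X ≫ (α_ _ _ _).hom ≫ F.obj X ◁ μ F Y X
      = μ F (X ⊗ Y) X ≫ F.map (α_ X Y X).hom ≫ δ F X (Y ⊗ X) := by
  rw [← cancel_mono (μ F X (Y ⊗ X))]
  simp only [Category.assoc, Functor.Monoidal.δ_μ, Category.comp_id,
    ← Functor.LaxMonoidal.associativity]
  rw [← comp_whiskerRight_assoc, Functor.Monoidal.δ_μ,
    MonoidalCategory.id_whiskerRight, Category.id_comp]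

/-- A monoidal functor sends exact pairings to exact pairings. -/
def mapExactPairing (X Y : C) [ExactPairing X Y] : ExactPairing (F.obj X) (F.obj Y) where
  coevaluation' := ε F ≫ F.map (η_ X Y) ≫ δ F X Y
  evaluation' := μ F Y X ≫ F.map (ε_ X Y) ≫ η F
  coevaluation_evaluation' := by
    simp only [MonoidalCategory.whiskerLeft_comp, comp_whiskerRight, Category.assoc]
    slice_lhs 3 5 => rw [key1]
    slice_lhs 2 3 => rw [Functor.LaxMonoidal.μ_natural_right]
    slice_lhs 5 6 => rw [Functor.OplaxMonoidal.δ_natural_left]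
    slice_lhs 3 5 => rw [← F.map_comp, ← F.map_comp, ExactPairing.coevaluation_evaluation]
    simp only [F.map_comp, Category.assoc]
    slice_lhs 1 3 => rw [← Functor.LaxMonoidal.right_unitality]
    slice_lhs 2 4 => rw [← Functor.OplaxMonoidal.left_unitality]
  evaluation_coevaluation' := by
    simp only [MonoidalCategory.whiskerLeft_comp, comp_whiskerRight, Category.assoc]
    slice_lhs 3 5 => rw [key2]
    slice_lhs 2 3 => rw [Functor.LaxMonoidal.μ_natural_left]
    slice_lhs 5 6 => rw [Functor.OplaxMonoidal.δ_natural_right]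
    slice_lhs 3 5 => rw [← F.map_comp, ← F.map_comp, ExactPairing.evaluation_coevaluation]
    simp only [F.map_comp, Category.assoc]
    slice_lhs 1 3 => rw [← Functor.LaxMonoidal.left_unitality]
    slice_lhs 2 4 => rw [← Functor.OplaxMonoidal.right_unitality]

/-- The unique point of `Discrete PUnit` is terminal. -/
def isTerminalPUnit : IsTerminal (⟨PUnit.unit⟩ : Discrete PUnit.{u + 1}) :=
  IsTerminal.ofUniqueHom (fun j => eqToHom (by obtain ⟨⟨⟩⟩ := j; rfl))
    (fun j m => Subsingleton.elim _ _)

/-- Colimit over the point. -/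
def colimitPUnitIso (F : Discrete PUnit.{u + 1} ⥤ C) [HasColimit F] :
    colimit F ≅ F.obj ⟨PUnit.unit⟩ :=
  colimit.isoColimitCocone ⟨_, colimitOfDiagramTerminal isTerminalPUnit F⟩

end

end TTGAux



namespace TTG

open TTGAux

variable {K : Type u} [SmallCategory K] [Preadditive K]

lemma mem_of_iso (D : Set (Mod K)) (hD : IsDefinable K D) {A B : Mod K} (e : A ≅ B)
    (hB : B ∈ D) : A ∈ D := by
  refine hD.pure_sub e.hom ⟨inferInstance, fun f _ g => ?_⟩ hB
  have hz : IsZero (cokernel e.hom) := (isZero_zero _).of_iso (cokernel.ofEpi _)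
  exact ⟨0, by rw [zero_comp]; exact hz.eq_of_tgt _ _⟩

lemma isFlat_yK (k : K) : IsFlat K ((yK K).obj k) :=
  ⟨Discrete PUnit.{u + 1}, inferInstance, inferInstance, Functor.fromPUnit k,
    ⟨colimitPUnitIso _⟩⟩

section

variable [MonoidalCategory K] [SymmetricCategory K] [RigidCategory K]
  [MonoidalCategory (Mod K)] [(yK K).Monoidal]
  [∀ X : Mod K, PreservesColimits (tensorLeft X)]

lemma swap_iso (k : K) (X : Mod K) (hX : IsFlat K X) :
    Nonempty ((yK K).obj k ⊗ X ≅ X ⊗ (yK K).obj k) := by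
  obtain ⟨J, _, _, G, ⟨c⟩⟩ := hX
  letI : ExactPairing ((yK K).obj k) ((yK K).obj kᘁ) :=
    mapExactPairing (yK K) k kᘁ
  letI : PreservesColimits (tensorRight ((yK K).obj k)) :=
    (tensorRightAdjunction ((yK K).obj k) ((yK K).obj kᘁ)).leftAdjoint_preservesColimits
  let e : (G ⋙ yK K) ⋙ tensorLeft ((yK K).obj k) ≅
      (G ⋙ yK K) ⋙ tensorRight ((yK K).obj k) :=
    NatIso.ofComponents
      (fun j => Functor.Monoidal.μIso (yK K) k (G.obj j) ≪≫
        (yK K).mapIso (β_ k (G.obj j)) ≪≫ (Functor.Monoidal.μIso (yK K) (G.obj j) k).symm)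
      (by
        intro i j f
        dsimp only [Functor.comp_obj, Functor.comp_map, curriedTensor_obj_obj, curriedTensor_obj_map,
          Functor.flip_obj_obj, Functor.flip_obj_map, curriedTensor_map_app, Iso.trans_hom, Iso.symm_hom, Functor.mapIso_hom,
          Functor.Monoidal.μIso_hom, Functor.Monoidal.μIso_inv]
        simp only [Functor.Monoidal.μIso_hom, Functor.Monoidal.μIso_inv]
        rw [Functor.LaxMonoidal.μ_natural_right_assoc, ← Functor.map_comp_assoc,
          BraidedCategory.braiding_naturality_right, Functor.map_comp, Category.assoc]
        simp only [Category.assoc, Functor.OplaxMonoidal.δ_natural_left])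
  exact ⟨(tensorLeft ((yK K).obj k)).mapIso c.symm ≪≫
    preservesColimitIso (tensorLeft ((yK K).obj k)) (G ⋙ yK K) ≪≫
    HasColimit.isoOfNatIso e ≪≫
    (preservesColimitIso (tensorRight ((yK K).obj k)) (G ⋙ yK K)).symm ≪≫
    (tensorRight ((yK K).obj k)).mapIso c⟩

end

end TTG


namespace TTG

variable (K : Type u) [SmallCategory K] [Preadditive K]
  [MonoidalCategory K] [SymmetricCategory K] [RigidCategory K]
  [HasZeroObject K] [HasShift K ℤ] [∀ n : ℤ, (shiftFunctor K n).Additive] [Pretriangulated K]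
  [MonoidalCategory (Mod K)] [MonoidalPreadditive (Mod K)]
  [(yK K).Monoidal] [∀ X : Mod K, PreservesColimits (tensorLeft X)]

/-- For `K` an essentially small rigid tt-category, a definable subcategory `D` of `Flat K`
is ⊗-closed if and only if `y k ⊗ X ∈ D` for every `k ∈ K` and `X ∈ D`. -/
theorem tensorClosed_iff_yoneda_tensor (D : Set (Mod K)) (hD : IsDefinable K D) :
    TensorClosed K D ↔ ∀ (k : K), ∀ X ∈ D, (yK K).obj k ⊗ X ∈ D := by
  constructor
  · intro hT k X hX
    obtain ⟨e⟩ := swap_iso k X (hD.flat X hX)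
    exact mem_of_iso D hD e (hT X hX _ (isFlat_yK k))
  · intro h X hX Y hY
    obtain ⟨J, _, _, G, ⟨c⟩⟩ := hY
    have hmem : ∀ j, ((G ⋙ yK K) ⋙ tensorLeft X).obj j ∈ D := by
      intro j
      obtain ⟨e⟩ := swap_iso (G.obj j) X (hD.flat X hX)
      exact mem_of_iso D hD e.symm (h (G.obj j) X hX)
    refine mem_of_iso D hD
      ((tensorLeft X).mapIso c.symm ≪≫ preservesColimitIso (tensorLeft X) (G ⋙ yK K))
      (hD.colim_mem J ((G ⋙ yK K) ⋙ tensorLeft X) hmem)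

end TTG
end

section
/- For a rigid essentially small tt-category K and X ∈ Flat K in the ⊗-closed definable subcategory D(S) associated to a Serre ⊗-ideal S ⊆ mod K, and any k ∈ K, the object y(k) ⊗ X again lies in D(S); the proof uses the adjunction isomorphism Hom(f, y(k) ⊗ X) ≅ Hom(f ⊗ D(y k), X) and the ideal property f ⊗ D(y k) ∈ S. -/
open CategoryTheory CategoryTheory.Limits CategoryTheory.MonoidalCategory
open CategoryTheory.Pretriangulated Opposite

universe u

namespace TTG

open CategoryTheory.Functor.LaxMonoidal CategoryTheory.Functor.OplaxMonoidal

noncomputable section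

section Transport

variable {C D : Type*} [Category C] [Category D] [MonoidalCategory C] [MonoidalCategory D]
  (F : C ⥤ D) [F.Monoidal]

/-- A monoidal functor sends exact pairings to exact pairings. -/
def exactPairingOfMonoidal (X Y : C) [ExactPairing X Y] : ExactPairing (F.obj X) (F.obj Y) where
  coevaluation' := ε F ≫ F.map (η_ X Y) ≫ δ F X Y
  evaluation' := μ F Y X ≫ F.map (ε_ X Y) ≫ η F
  coevaluation_evaluation' := by
    have hA : (α_ (F.obj Y) (F.obj X) (F.obj Y)).inv ≫ μ F Y X ▷ F.obj Y =
        F.obj Y ◁ μ F X Y ≫ μ F Y (X ⊗ Y) ≫ F.map (α_ Y X Y).inv ≫ δ F (Y ⊗ X) Y := by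
      rw [Functor.LaxMonoidal.associativity_inv_assoc, Functor.Monoidal.μ_δ, Category.comp_id]
    simp only [MonoidalCategory.whiskerLeft_comp, comp_whiskerRight, Category.assoc]
    rw [reassoc_of% hA]
    simp only [Functor.Monoidal.whiskerLeft_δ_μ_assoc, Functor.LaxMonoidal.μ_natural_right_assoc,
      Functor.OplaxMonoidal.δ_natural_left_assoc, Category.assoc]
    rw [← F.map_comp_assoc, ← F.map_comp_assoc, Category.assoc,
      ExactPairing.coevaluation_evaluation,
      F.map_comp_assoc, ← Functor.OplaxMonoidal.left_unitality,
      ← Functor.LaxMonoidal.right_unitality_assoc]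
  evaluation_coevaluation' := by
    have hB : δ F X Y ▷ F.obj X ≫ (α_ (F.obj X) (F.obj Y) (F.obj X)).hom =
        μ F (X ⊗ Y) X ≫ F.map (α_ X Y X).hom ≫ δ F X (Y ⊗ X) ≫ F.obj X ◁ δ F Y X := by
      rw [← Functor.OplaxMonoidal.associativity, Functor.Monoidal.μ_δ_assoc]
    simp only [MonoidalCategory.whiskerLeft_comp, comp_whiskerRight, Category.assoc]
    rw [reassoc_of% hB]
    simp only [Functor.Monoidal.whiskerLeft_δ_μ_assoc, Functor.LaxMonoidal.μ_natural_left_assoc,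
      Functor.OplaxMonoidal.δ_natural_right_assoc, Category.assoc]
    rw [← F.map_comp_assoc, ← F.map_comp_assoc, Category.assoc,
      ExactPairing.evaluation_coevaluation,
      F.map_comp_assoc, ← Functor.OplaxMonoidal.right_unitality,
      ← Functor.LaxMonoidal.left_unitality_assoc]

end Transport

section Aux
set_option linter.unusedSectionVars false

variable (K : Type u) [SmallCategory K] [Preadditive K]
  [MonoidalCategory K] [SymmetricCategory K] [RigidCategory K]
  [HasZeroObject K] [HasShift K ℤ] [∀ n : ℤ, (shiftFunctor K n).Additive] [Pretriangulated K]
  [MonoidalCategory (Mod K)] [MonoidalPreadditive (Mod K)]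
  [(yK K).Monoidal] [∀ X : Mod K, PreservesColimits (tensorLeft X)]

/-- A Serre subcategory is closed under isomorphisms (of fp objects). -/
lemma mem_of_iso_s6 {S : Set (Mod K)} (hS : IsSerre K S) {f g : Mod K} (e : f ≅ g)
    (hg : IsFP K g) (hf : f ∈ S) : g ∈ S :=
  hS.quot_mem e.hom inferInstance hg hf

lemma isFP_y (k : K) : IsFP K ((yK K).obj k) :=
  ⟨k, k, 0, ⟨cokernelZeroIsoTarget.symm⟩⟩

/-- The transported exact pairing on representables. -/
def yPairing (k : K) : ExactPairing ((yK K).obj k) ((yK K).obj kᘁ) :=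
  exactPairingOfMonoidal (yK K) k (kᘁ)

/-- `tensorRight (y k)` preserves colimits, since `y k` is dualizable. -/
def tensorRightYPreserves (k : K) : PreservesColimits (tensorRight ((yK K).obj k)) :=
  letI := yPairing K k
  (tensorRightAdjunction ((yK K).obj k) ((yK K).obj (kᘁ))).leftAdjoint_preservesColimits

/-- `y k ⊗ cokernel (y h) ≅ cokernel (y (k ◁ h))`. -/
def isoCokLeft (k : K) {a b : K} (h : a ⟶ b) :
    (yK K).obj k ⊗ cokernel ((yK K).map h) ≅ cokernel ((yK K).map (k ◁ h)) :=
  (PreservesCokernel.iso (tensorLeft ((yK K).obj k)) ((yK K).map h)) ≪≫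
    cokernel.mapIso _ ((yK K).map (k ◁ h))
      (Functor.Monoidal.μIso (yK K) k a) (Functor.Monoidal.μIso (yK K) k b)
      (by simpa using Functor.LaxMonoidal.μ_natural_right (yK K) k h)

/-- `cokernel (y (k ◁ h)) ≅ cokernel (y h) ⊗ y k`. -/
def isoCokRight (k : K) {a b : K} (h : a ⟶ b) :
    cokernel ((yK K).map (k ◁ h)) ≅ cokernel ((yK K).map h) ⊗ (yK K).obj k :=
  letI := tensorRightYPreserves K k
  (cokernel.mapIso _ ((yK K).map (h ▷ k))
      ((yK K).mapIso (β_ k a)) ((yK K).mapIso (β_ k b))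
      (by rw [Functor.mapIso_hom, Functor.mapIso_hom, ← Functor.map_comp, ← Functor.map_comp,
            BraidedCategory.braiding_naturality_right])) ≪≫
  (cokernel.mapIso _ ((yK K).map h ▷ (yK K).obj k)
      (Functor.Monoidal.μIso (yK K) a k).symm (Functor.Monoidal.μIso (yK K) b k).symm
      (by
        simp only [Iso.symm_hom, Functor.Monoidal.μIso_inv]
        exact (Functor.OplaxMonoidal.δ_natural_left (yK K) h k).symm)) ≪≫
  (PreservesCokernel.iso (tensorRight ((yK K).obj k)) ((yK K).map h)).symm

/-- Left tensoring by a representable preserves membership in a Serre ⊗-ideal. -/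
lemma mem_tensor_left {S : Set (Mod K)} (hS : IsSerreTensorIdeal K S) (k : K) {f : Mod K}
    (hf : f ∈ S) : (yK K).obj k ⊗ f ∈ S := by
  obtain ⟨a, b, g, ⟨e₀⟩⟩ := hS.1.fp f hf
  have hg : (yK K).map ((yK K).preimage g) = g := (yK K).map_preimage g
  set h : a ⟶ b := (yK K).preimage g with hh
  have e : f ≅ cokernel ((yK K).map h) := e₀ ≪≫ cokernelIsoOfEq hg.symm
  have E1 : (yK K).obj k ⊗ f ≅ cokernel ((yK K).map (k ◁ h)) :=
    (tensorLeft ((yK K).obj k)).mapIso e ≪≫ isoCokLeft K k h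
  have E2 : (yK K).obj k ⊗ f ≅ cokernel ((yK K).map h) ⊗ (yK K).obj k :=
    E1 ≪≫ isoCokRight K k h
  have hFP1 : IsFP K ((yK K).obj k ⊗ f) := ⟨_, _, (yK K).map (k ◁ h), ⟨E1⟩⟩
  have hcok : cokernel ((yK K).map h) ∈ S :=
    mem_of_iso_s6 K hS.1 e ⟨a, b, (yK K).map h, ⟨Iso.refl _⟩⟩ hf
  have hmem : cokernel ((yK K).map h) ⊗ (yK K).obj k ∈ S :=
    hS.2 _ hcok _ (isFP_y K k)
  exact mem_of_iso_s6 K hS.1 E2.symm hFP1 hmem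

/-- Left tensoring by a representable preserves flatness. -/
lemma isFlat_tensor (k : K) {X : Mod K} (hX : IsFlat K X) :
    IsFlat K ((yK K).obj k ⊗ X) := by
  obtain ⟨J, iJ, fJ, Dg, ⟨e⟩⟩ := hX
  refine ⟨J, iJ, fJ, Dg ⋙ tensorLeft k, ⟨?_⟩⟩
  have i1 : (Dg ⋙ tensorLeft k) ⋙ yK K ≅ (Dg ⋙ yK K) ⋙ tensorLeft ((yK K).obj k) :=
    NatIso.ofComponents (fun j => (Functor.Monoidal.μIso (yK K) k (Dg.obj j)).symm)
      (fun {j j'} f => by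
        simpa using (Functor.OplaxMonoidal.δ_natural_right (yK K) k (Dg.map f)).symm)
  exact HasColimit.isoOfNatIso i1 ≪≫
    (preservesColimitIso (tensorLeft ((yK K).obj k)) (Dg ⋙ yK K)).symm ≪≫
    (tensorLeft ((yK K).obj k)).mapIso e

end Aux

end

end TTG

namespace TTG

variable (K : Type u) [SmallCategory K] [Preadditive K]
  [MonoidalCategory K] [SymmetricCategory K] [RigidCategory K]
  [HasZeroObject K] [HasShift K ℤ] [∀ n : ℤ, (shiftFunctor K n).Additive] [Pretriangulated K]
  [MonoidalCategory (Mod K)] [MonoidalPreadditive (Mod K)]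
  [(yK K).Monoidal] [∀ X : Mod K, PreservesColimits (tensorLeft X)]

/-- For a rigid essentially small tt-category `K`, a Serre ⊗-ideal `S ⊆ mod K`,
`X ∈ D(S)` and `k ∈ K`, the object `y k ⊗ X` again lies in `D(S)`. -/
theorem yoneda_tensor_mem_Dcal (S : Set (Mod K)) (hS : IsSerreTensorIdeal K S) :
    ∀ X ∈ Dcal K S, ∀ k : K, (yK K).obj k ⊗ X ∈ Dcal K S := by
  intro X hX k
  letI : ExactPairing ((yK K).obj k) ((yK K).obj (kᘁ)) := yPairing K k
  refine ⟨isFlat_tensor K k hX.1, ?_⟩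
  intro f hf g
  have h0 : (tensorLeftHomEquiv f ((yK K).obj k) ((yK K).obj (kᘁ)) X).symm g = 0 :=
    hX.2 _ (mem_tensor_left K hS (kᘁ) hf) _
  calc g = (tensorLeftHomEquiv f ((yK K).obj k) ((yK K).obj (kᘁ)) X)
        ((tensorLeftHomEquiv f ((yK K).obj k) ((yK K).obj (kᘁ)) X).symm g) :=
        (Equiv.apply_symm_apply _ _).symm
    _ = 0 := by rw [h0]; simp [tensorLeftHomEquiv]

end TTG
end
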